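/- The sequence f_n defined by H_n = ln n + γ + 1/(2n + f_n) is strictly monotonically decreasing in n ≥ 1. -/

import Mathlib

open Real Filter

noncomputable def H (n : ℕ) : ℝ := ∑ i ∈ Finset.range n, (1 : ℝ) / (i + 1)

noncomputable def f (n : ℕ) : ℝ := 1 / (H n - Real.log n - Real.eulerMascheroniConstant) - 2 * n

open Topology

noncomputable def d (n : ℕ) : ℝ := H n - Real.log n - Real.eulerMascheroniConstant
noncomputable def a (t : ℝ) : ℝ := 1/(2*t) - 1/(12*t^2)

lemma H_eq (n : ℕ) : H n = (harmonic n : ℝ) := by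
  unfold H harmonic; push_cast; simp [one_div]

lemma tendsto_d : Tendsto d atTop (𝓝 0) := by
  have h := (Real.tendsto_harmonic_sub_log.sub_const Real.eulerMascheroniConstant)
  simp only [sub_self] at h
  refine h.congr fun n => ?_
  rw [d, H_eq]

lemma tendsto_a : Tendsto (fun n : ℕ => a n) atTop (𝓝 0) := by
  have h : Tendsto (fun n : ℕ => (1:ℝ)/n) atTop (𝓝 0) := tendsto_one_div_atTop_nhds_zero_nat
  have h2 : Tendsto (fun n : ℕ => (1:ℝ)/2 * (1/n) - 1/12 * ((1/n)*(1/n))) atTop (𝓝 ((1:ℝ)/2 * 0 - 1/12 * (0*0))) :=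
    ((h.const_mul _).sub ((h.mul h).const_mul _))
  norm_num at h2
  refine h2.congr' ?_
  filter_upwards [eventually_ne_atTop 0] with n hn
  have hn' : (0:ℝ) < n := by positivity
  unfold a; field_simp

lemma d_sub (n : ℕ) (hn : 1 ≤ n) :
    d n - d (n+1) = -Real.log (1 - 1/(n+1)) - 1/(n+1) := by
  have hn0 : (0:ℝ) < n := by exact_mod_cast hn
  have h1 : H (n+1) = H n + 1/(n+1) := by simp [H, Finset.sum_range_succ]
  have h2 : (1:ℝ) - 1/((n:ℝ)+1) = n/(n+1) := by field_simp; ring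
  have h3 : Real.log ((n:ℝ)/(n+1)) = Real.log n - Real.log (n+1) := by
    rw [Real.log_div (ne_of_gt hn0) (by positivity)]
  unfold d
  rw [h1, h2, h3]
  push_cast
  ring

lemma log_ub {x : ℝ} (h0 : 0 < x) (h2 : x ≤ 1/2) :
    -Real.log (1-x) ≤ x + x^2/2 + x^3/3 + x^4/4 + x^5/5 + x^6/6 + x^7/7 + 2*x^8 := by
  have hx : |x| < 1 := by rw [abs_of_pos h0]; linarith
  have h := Real.abs_log_sub_add_sum_range_le hx 7
  rw [abs_of_pos h0] at h
  simp only [Finset.sum_range_succ, Finset.sum_range_zero] at h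
  norm_num at h
  rw [abs_le] at h
  have herr : x^8/(1-x) ≤ 2*x^8 := by
    rw [div_le_iff₀ (by linarith)]
    nlinarith [pow_nonneg h0.le 8]
  nlinarith [h.1, h.2]

lemma log_lb {x : ℝ} (h0 : 0 < x) (h2 : x ≤ 1/2) :
    x + x^2/2 + x^3/3 + x^4/4 + x^5/5 + x^6/6 + x^7/7 - 2*x^8 ≤ -Real.log (1-x) := by
  have hx : |x| < 1 := by rw [abs_of_pos h0]; linarith
  have h := Real.abs_log_sub_add_sum_range_le hx 7
  rw [abs_of_pos h0] at h
  simp only [Finset.sum_range_succ, Finset.sum_range_zero] at h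
  norm_num at h
  rw [abs_le] at h
  have herr : x^8/(1-x) ≤ 2*x^8 := by
    rw [div_le_iff₀ (by linarith)]
    nlinarith [pow_nonneg h0.le 8]
  nlinarith [h.1, h.2]

lemma ratA (t : ℝ) (ht : 2 ≤ t) :
    a t - a (t+1) + 1/(t+1) ≤
      (1/(t+1)) + (1/(t+1))^2/2 + (1/(t+1))^3/3 + (1/(t+1))^4/4 + (1/(t+1))^5/5
        + (1/(t+1))^6/6 + (1/(t+1))^7/7 - 2*(1/(t+1))^8 := by
  have ht0 : (0:ℝ) < t := by linarith
  have ht1 : (0:ℝ) < t + 1 := by linarith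
  rw [← sub_nonneg]
  have hy : (0:ℝ) ≤ t - 2 := by linarith
  have key : (1/(t+1)) + (1/(t+1))^2/2 + (1/(t+1))^3/3 + (1/(t+1))^4/4 + (1/(t+1))^5/5
        + (1/(t+1))^6/6 + (1/(t+1))^7/7 - 2*(1/(t+1))^8 - (a t - a (t+1) + 1/(t+1))
      = (5364 + 35208*(t-2) + 39648*(t-2)^2 + 16176*(t-2)^3 + 2604*(t-2)^4 + 168*(t-2)^5)
          / (5040*t^2*(t+1)^8) := by
    unfold a; field_simp; ring
  rw [key]
  apply div_nonneg _ (by positivity)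
  nlinarith [pow_nonneg hy 2, pow_nonneg hy 3, pow_nonneg hy 4, pow_nonneg hy 5]

lemma ratB (t : ℝ) (ht : 3 ≤ t) :
    (1/(t+1)) + (1/(t+1))^2/2 + (1/(t+1))^3/3 + (1/(t+1))^4/4 + (1/(t+1))^5/5
        + (1/(t+1))^6/6 + (1/(t+1))^7/7 + 2*(1/(t+1))^8
      < 1/(t+1) + 2 * (a t * a (t+1)) := by
  have ht0 : (0:ℝ) < t := by linarith
  have ht1 : (0:ℝ) < t + 1 := by linarith
  rw [← sub_pos]
  have hy : (0:ℝ) ≤ t - 3 := by linarith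
  have key : 1/(t+1) + 2 * (a t * a (t+1)) - ((1/(t+1)) + (1/(t+1))^2/2 + (1/(t+1))^3/3
        + (1/(t+1))^4/4 + (1/(t+1))^5/5 + (1/(t+1))^6/6 + (1/(t+1))^7/7 + 2*(1/(t+1))^8)
      = (6112 + 134832*(t-3) + 143160*(t-3)^2 + 61328*(t-3)^3 + 13356*(t-3)^4
          + 1512*(t-3)^5 + 70*(t-3)^6) / (5040*t^2*(t+1)^8) := by
    unfold a; field_simp; ring
  rw [key]
  apply div_pos _ (by positivity)
  nlinarith [pow_nonneg hy 2, pow_nonneg hy 3, pow_nonneg hy 4, pow_nonneg hy 5, pow_nonneg hy 6]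

-- telescoping ingredient
lemma lemA (n : ℕ) (hn : 2 ≤ n) : a n - a ((n:ℝ)+1) ≤ d n - d (n+1) := by
  have ht : (2:ℝ) ≤ (n:ℝ) := by exact_mod_cast hn
  have hx0 : (0:ℝ) < 1/((n:ℝ)+1) := by positivity
  have hx2 : (1:ℝ)/((n:ℝ)+1) ≤ 1/2 := by
    rw [div_le_div_iff₀ (by linarith) (by norm_num)]; linarith
  have h1 := log_lb hx0 hx2
  have h2 := ratA n ht
  have h3 := d_sub n (by omega)
  push_cast at h3
  linarith

lemma a_le_d (n : ℕ) (hn : 2 ≤ n) : a n ≤ d n := by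
  have mono : ∀ N, n ≤ N → d N - a N ≤ d n - a n := by
    intro N hN
    induction N, hN using Nat.le_induction with
    | base => exact le_refl _
    | succ N hN ih =>
      have h := lemA N (le_trans hn hN)
      have : (((N+1 : ℕ)):ℝ) = (N:ℝ)+1 := by push_cast; ring
      rw [this]
      linarith
  have he : Tendsto (fun N : ℕ => d N - a N) atTop (𝓝 0) := by
    have := tendsto_d.sub tendsto_a
    simpa using this
  have h0 : (0:ℝ) ≤ d n - a n := by
    refine le_of_tendsto he ?_
    filter_upwards [eventually_ge_atTop n] with N hN using mono N hN
  linarith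

lemma a_pos (t : ℝ) (ht : 2 ≤ t) : 0 < a t := by
  have : a t = (6*t-1)/(12*t^2) := by unfold a; field_simp; ring
  rw [this]
  apply div_pos (by linarith) (by positivity)

lemma d_pos (n : ℕ) (hn : 2 ≤ n) : 0 < d n :=
  lt_of_lt_of_le (a_pos n (by exact_mod_cast hn)) (a_le_d n hn)

lemma a_two : a 2 = 11/48 := by unfold a; norm_num
lemma a_three : a 3 = 17/108 := by unfold a; norm_num

lemma d_one_sub : d 1 - d 2 = Real.log 2 - 1/2 := by
  have h := d_sub 1 le_rfl
  norm_num at h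
  rw [h, one_div, Real.log_inv]
  ring

lemma key_main (k : ℕ) (hk : 1 ≤ k) : d k - d (k+1) < 2 * (d k * d (k+1)) := by
  rcases lt_or_ge k 3 with h3 | h3
  · interval_cases k
    · -- k = 1
      have hd2 : (11:ℝ)/48 ≤ d 2 := by rw [← a_two]; exact a_le_d 2 le_rfl
      have hsub := d_one_sub
      have hub := Real.log_two_lt_d9
      have hlb := Real.log_two_gt_d9
      nlinarith [hd2, hsub, hub, hlb]
    · -- k = 2
      have hd2 : (11:ℝ)/48 ≤ d 2 := by rw [← a_two]; exact a_le_d 2 le_rfl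
      have hd3 : (17:ℝ)/108 ≤ d 3 := by rw [← a_three]; exact a_le_d 3 (by norm_num)
      have hsub := d_sub 2 (by norm_num)
      norm_num at hsub
      -- d 2 - d 3 = -log(1-1/3) - 1/3 ; bound -log(2/3) with 10-term series
      have hx : |(1:ℝ)/3| < 1 := by rw [abs_of_pos (by norm_num)]; norm_num
      have h := Real.abs_log_sub_add_sum_range_le hx 10
      simp only [Finset.sum_range_succ, Finset.sum_range_zero] at h
      rw [abs_of_pos (by norm_num : (0:ℝ) < 1/3)] at h
      norm_num at h
      rw [abs_le] at h
      nlinarith [h.1, h.2, hd2, hd3, mul_le_mul hd2 hd3 (by norm_num) (d_pos 2 le_rfl).le]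
  · -- k ≥ 3
    have ht : (3:ℝ) ≤ (k:ℝ) := by exact_mod_cast h3
    have hx0 : (0:ℝ) < 1/((k:ℝ)+1) := by positivity
    have hx2 : (1:ℝ)/((k:ℝ)+1) ≤ 1/2 := by
      rw [div_le_div_iff₀ (by linarith) (by norm_num)]; linarith
    have h1 := log_ub hx0 hx2
    have h2 := ratB k ht
    have hsub := d_sub k (by omega)
    push_cast at hsub
    have hak := a_le_d k (by omega)
    have hak1 : a ((k:ℝ)+1) ≤ d (k+1) := by
      have := a_le_d (k+1) (by omega)
      have hc : (((k+1:ℕ)):ℝ) = (k:ℝ)+1 := by push_cast; ring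
      rwa [hc] at this
    have hap : 0 < a ((k:ℝ)) := a_pos _ (by linarith)
    have hap1 : 0 < a ((k:ℝ)+1) := a_pos _ (by linarith)
    have hmul : a (k:ℝ) * a ((k:ℝ)+1) ≤ d k * d (k+1) :=
      mul_le_mul hak hak1 hap1.le (d_pos k (by omega)).le
    linarith

lemma f_step (k : ℕ) (hk : 1 ≤ k) : f (k+1) < f k := by
  have hd0 : 0 < d k := by
    rcases Nat.lt_or_ge k 2 with h | h
    · interval_cases k
      have hd2 : (11:ℝ)/48 ≤ d 2 := by rw [← a_two]; exact a_le_d 2 le_rfl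
      have hsub := d_one_sub
      have hlb := Real.log_two_gt_d9
      nlinarith
    · exact d_pos k h
  have hd1 : 0 < d (k+1) := d_pos (k+1) (by omega)
  have hmain := key_main k hk
  have hlt : 1/(d (k+1)) - 1/(d k) < 2 := by
    rw [div_sub_div _ _ hd1.ne' hd0.ne', div_lt_iff₀ (by positivity)]
    nlinarith
  have hf : ∀ n : ℕ, f n = 1/(d n) - 2*n := fun n => rfl
  rw [hf, hf]
  push_cast
  linarith

theorem stmt3 (m n : ℕ) (hm : 1 ≤ m) (hmn : m < n) : f n < f m := by
  induction n, hmn using Nat.le_induction with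
  | base => exact f_step m hm
  | succ n hn ih =>
    have : f (n+1) < f n := f_step n (by omega)
    linarith
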